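/- Let α be a type with three pairwise distinct elements a, h, b : α, let m T : ℕ and n : Fin m → ℕ. Consider the language L₁ = (List.ofFn (fun i : Fin m => ({[a]} : Language α) ^ (n i) + 1)).prod * {[h]} * {[b]}. Then List.replicate T a ++ [h, b] ∈ L₁ if and only if there exists a Finset s of Fin m with ∑ i in s, n i = T. (This is the correctness of the reduction used in the paper's NP-hardness lemma for counter-ambiguity: the word a^T # b takes a path through the branch (a{n₁}+ε)⋯(a{n_m}+ε)#b exactly when T is a subset sum of {n₁,…,n_m}.) -/

import Mathlib

lemma aux_mem_pow_singleton {α : Type*} (a : α) (k : ℕ) (x : List α) :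
    x ∈ ({[a]} : Language α) ^ k ↔ x = List.replicate k a := by
  induction k generalizing x with
  | zero => simp [Language.mem_one]
  | succ k ih =>
    rw [pow_succ, Language.mem_mul]
    constructor
    · rintro ⟨y, hy, z, hz, rfl⟩
      have hz' : z = [a] := hz
      rw [ih] at hy
      subst hy hz'
      rw [List.replicate_succ']
    · rintro rfl
      exact ⟨List.replicate k a, (ih _).2 rfl, [a], rfl, (List.replicate_succ' ..).symm⟩

lemma aux_mem_prod_ofFn {α : Type*} (a : α) :
    ∀ (m : ℕ) (n : Fin m → ℕ) (x : List α),
      x ∈ (List.ofFn (fun i : Fin m => ({[a]} : Language α) ^ (n i) + 1)).prod ↔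
        ∃ g : Fin m → ℕ, (∀ i, g i = n i ∨ g i = 0) ∧ x = List.replicate (∑ i, g i) a := by
  intro m
  induction m with
  | zero =>
    intro n x
    simp [Language.mem_one, Finset.univ_eq_empty, eq_comm]
  | succ m ih =>
    intro n x
    rw [List.ofFn_succ, List.prod_cons, Language.mem_mul]
    constructor
    · rintro ⟨y, hy, z, hz, rfl⟩
      rw [ih] at hz
      obtain ⟨g, hg, rfl⟩ := hz
      rw [Language.mem_add, aux_mem_pow_singleton, Language.mem_one] at hy
      rcases hy with hy | hy
      · refine ⟨Fin.cases (n 0) g, ?_, ?_⟩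
        · intro i
          refine Fin.cases (Or.inl rfl) (fun j => ?_) i
          simpa using hg j
        · subst hy
          rw [Fin.sum_univ_succ]
          simp only [Fin.cases_zero, Fin.cases_succ, List.replicate_add]
      · refine ⟨Fin.cases 0 g, ?_, ?_⟩
        · intro i
          refine Fin.cases (Or.inr rfl) (fun j => ?_) i
          simpa using hg j
        · subst hy
          rw [Fin.sum_univ_succ]
          simp only [Fin.cases_zero, Fin.cases_succ, zero_add, List.nil_append]
    · rintro ⟨g, hg, rfl⟩
      refine ⟨List.replicate (g 0) a, ?_, List.replicate (∑ i : Fin m, g i.succ) a,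
        (ih (fun i => n i.succ) _).2 ⟨fun i => g i.succ, fun i => hg i.succ, rfl⟩, ?_⟩
      · rw [Language.mem_add, aux_mem_pow_singleton, Language.mem_one]
        rcases hg 0 with h0 | h0
        · exact Or.inl (by rw [h0])
        · exact Or.inr (by rw [h0, List.replicate_zero])
      · rw [Fin.sum_univ_succ, List.replicate_add]

theorem stmt_1 {α : Type*} (a h b : α) (hah : a ≠ h) (hab : a ≠ b) (hhb : h ≠ b)
    (m T : ℕ) (n : Fin m → ℕ) :
    List.replicate T a ++ [h, b] ∈
        (List.ofFn (fun i : Fin m => ({[a]} : Language α) ^ (n i) + 1)).prod *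
          {[h]} * {[b]} ↔
      ∃ s : Finset (Fin m), ∑ i ∈ s, n i = T := by
  have key : ∀ x : List α,
      x ∈ (List.ofFn (fun i : Fin m => ({[a]} : Language α) ^ (n i) + 1)).prod ↔
        ∃ s : Finset (Fin m), x = List.replicate (∑ i ∈ s, n i) a := by
    intro x
    rw [aux_mem_prod_ofFn]
    constructor
    · rintro ⟨g, hg, rfl⟩
      refine ⟨Finset.univ.filter (fun i => g i ≠ 0), ?_⟩
      congr 1
      rw [Finset.sum_filter]
      apply Finset.sum_congr rfl
      intro i _
      rcases hg i with h0 | h0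
      · rw [h0]; split_ifs with hz <;> omega
      · rw [h0]; split_ifs with hz <;> omega
    · rintro ⟨s, rfl⟩
      refine ⟨fun i => if i ∈ s then n i else 0, fun i => ?_, ?_⟩
      · by_cases hi : i ∈ s <;> simp [hi]
      · congr 1
        rw [Finset.sum_ite_mem, Finset.univ_inter]
  rw [Language.mem_mul]
  constructor
  · rintro ⟨y, hy, z, hz, hw⟩
    rw [Language.mem_mul] at hy
    obtain ⟨u, hu, v, hv, rfl⟩ := hy
    have hz' : z = [b] := hz
    have hv' : v = [h] := hv
    subst hz' hv'
    obtain ⟨s, rfl⟩ := (key u).1 hu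
    have hlen := congrArg List.length hw
    simp at hlen
    exact ⟨s, hlen⟩
  · rintro ⟨s, rfl⟩
    refine ⟨List.replicate (∑ i ∈ s, n i) a ++ [h], ?_, [b], rfl, by simp⟩
    rw [Language.mem_mul]
    exact ⟨List.replicate (∑ i ∈ s, n i) a, (key _).2 ⟨s, rfl⟩, [h], rfl, rfl⟩
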